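/- If P is a monic complex polynomial of degree n ≥ 1 and L(P) = λ·P for some λ ∈ ℂ, then λ = δ_n^{(0)} = Σ_{i=1}^{min(n,N)} C(n,i)·i!·a_{i,i}. -/
import Mathlib


/-- If `P` is a monic complex polynomial of degree `n ≥ 1` and
`L(P) = λ·P` for some `λ ∈ ℂ`, then `λ = δ_n^{(0)} = Σ_{i=1}^{min(n,N)} C(n,i)·i!·a_{i,i}`. -/
theorem stmt_1 (N : ℕ) (hN : 1 ≤ N) (a : ℕ → ℕ → ℂ)
    (ha : ∀ i j : ℕ, (N < i ∨ i < j) → a i j = 0) (ha0 : a 0 0 = 0)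
    (n : ℕ) (hn : 1 ≤ n) (P : Polynomial ℂ) (hmonic : P.Monic) (hdeg : P.natDegree = n)
    (lam : ℂ)
    (hL : ∑ i ∈ Finset.Icc 1 N,
        (∑ j ∈ Finset.range (i + 1), Polynomial.C (a i j) * Polynomial.X ^ j) *
          (⇑Polynomial.derivative)^[i] P = Polynomial.C lam * P) :
    lam = ∑ i ∈ Finset.Icc 0 n, (n.choose i * i.factorial : ℂ) * a i (i - 0) ∧
      lam = ∑ i ∈ Finset.Icc 1 (min n N), (n.choose i * i.factorial : ℂ) * a i i := by
  have hPn : P.coeff n = 1 := by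
    have := hmonic.leadingCoeff
    rwa [Polynomial.leadingCoeff, hdeg] at this
  -- take coefficient n on both sides of hL
  have hcoeff := congrArg (fun Q => Polynomial.coeff Q n) hL
  simp only [Polynomial.finset_sum_coeff, Polynomial.coeff_C_mul, hPn, mul_one] at hcoeff
  -- compute each term
  have hterm : ∀ i ∈ Finset.Icc 1 N,
      Polynomial.coeff ((∑ j ∈ Finset.range (i + 1),
        Polynomial.C (a i j) * Polynomial.X ^ j) * (⇑Polynomial.derivative)^[i] P) n
      = if i ≤ n then (n.descFactorial i : ℂ) * a i i else 0 := by
    intro i hi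
    rw [Finset.sum_mul, Polynomial.finset_sum_coeff]
    have h1 : ∀ j ∈ Finset.range (i + 1),
        Polynomial.coeff (Polynomial.C (a i j) * Polynomial.X ^ j *
          (⇑Polynomial.derivative)^[i] P) n
        = if j = i ∧ i ≤ n then (n.descFactorial i : ℂ) * a i i else 0 := by
      intro j hj
      have hji : j ≤ i := Nat.lt_succ_iff.mp (Finset.mem_range.mp hj)
      rw [mul_assoc, Polynomial.coeff_C_mul, Polynomial.X_pow_mul,
        Polynomial.coeff_mul_X_pow']
      by_cases hjn : j ≤ n
      · rw [if_pos hjn, Polynomial.coeff_iterate_derivative]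
        by_cases hij : j = i
        · subst hij
          rw [Nat.sub_add_cancel hjn, hPn, if_pos ⟨rfl, hjn⟩]
          simp [mul_comm]
        · have hlt : j < i := lt_of_le_of_ne hji hij
          have : n < n - j + i := by omega
          rw [Polynomial.coeff_eq_zero_of_natDegree_lt (by rw [hdeg]; exact this)]
          rw [if_neg (by tauto)]
          simp
      · have : ¬ (j = i ∧ i ≤ n) := by omega
        rw [if_neg hjn, if_neg this, mul_zero]
    rw [Finset.sum_congr rfl h1]
    by_cases hin : i ≤ n
    · rw [Finset.sum_eq_single i]
      · simp [hin]
      · intro b _ hb; simp [hb]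
      · intro h; exact absurd (Finset.mem_range.mpr (Nat.lt_succ_self i)) h
    · rw [if_neg hin]
      apply Finset.sum_eq_zero
      intro j _
      rw [if_neg (by tauto)]
  rw [Finset.sum_congr rfl hterm] at hcoeff
  -- key form of lam
  have key : lam = ∑ i ∈ Finset.Icc 1 (min n N),
      (n.choose i * i.factorial : ℂ) * a i i := by
    rw [← hcoeff]
    rw [← Finset.sum_subset (Finset.Icc_subset_Icc_right (min_le_right n N))]
    · apply Finset.sum_congr rfl
      intro i hi
      obtain ⟨h1, h2⟩ := Finset.mem_Icc.mp hi
      have hin : i ≤ n := le_trans h2 (min_le_left n N)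
      rw [if_pos hin, Nat.descFactorial_eq_factorial_mul_choose]
      push_cast
      ring
    · intro i hi hni
      obtain ⟨h1, h2⟩ := Finset.mem_Icc.mp hi
      have : n < i := by
        rcases Nat.lt_or_ge n i with h | h
        · exact h
        · exact absurd (Finset.mem_Icc.mpr ⟨h1, le_min h h2⟩) hni
      rw [if_neg (by omega)]
  refine ⟨?_, key⟩
  rw [key]
  symm
  rw [← Finset.sum_subset (show Finset.Icc 1 (min n N) ⊆ Finset.Icc 0 n from
      Finset.Icc_subset_Icc (Nat.zero_le 1) (min_le_left n N))]
  · apply Finset.sum_congr rfl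
    intro i _
    simp
  · intro i hi hni
    obtain ⟨_, h2⟩ := Finset.mem_Icc.mp hi
    rcases Nat.eq_zero_or_pos i with h | h
    · subst h; simpa using ha0
    · have : N < i := by
        have : ¬ i ≤ min n N := fun hc => hni (Finset.mem_Icc.mpr ⟨h, hc⟩)
        omega
      rw [ha i (i - 0) (Or.inl (by simpa using this)), mul_zero]
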